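/- Every clean compact peg permutation π^ε of length n ≥ 2 contains at least one peg pattern γ^δ of length n−1 which is clean compact as well. -/

import Mathlib

/-! ## Basic definitions: permutations as lists, reversals, distances -/

/-- Decorations for peg permutations: `+`, `-`, `•`. -/
inductive Deco where
  | plus : Deco
  | minus : Deco
  | dot : Deco
deriving DecidableEq, Repr

/-- A peg permutation: a list of entries together with decorations. -/
abbrev PegPerm := List (ℕ × Deco)

def pegDefault : ℕ × Deco := (0, Deco.dot)

/-- The identity permutation `1 2 ⋯ n` as a list. -/
def idPerm (n : ℕ) : List ℕ := List.range' 1 n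

/-- A list of naturals is a permutation (of `1,…,n` where `n` is its length). -/
def IsPermList (π : List ℕ) : Prop := π.Perm (idPerm π.length)

/-- Reverse the segment of a list from (0-indexed) position `i` to `j` inclusive. -/
def segReverse {α : Type*} (l : List α) (i j : ℕ) : List α :=
  l.take i ++ ((l.drop i).take (j + 1 - i)).reverse ++ l.drop (j + 1)

/-- One reversal step on permutations (reverse a segment of length at least 2). -/
def RevStep (l l' : List ℕ) : Prop :=
  ∃ i j, i < j ∧ j < l.length ∧ l' = segReverse l i j

/-- One prefix reversal step on permutations (reverse a prefix of length at least 2). -/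
def PrefRevStep (l l' : List ℕ) : Prop :=
  ∃ j, 0 < j ∧ j < l.length ∧ l' = segReverse l 0 j

/-- Reachability in exactly `k` steps of the step relation `step`. -/
def ReachIn {α : Type*} (step : α → α → Prop) : ℕ → α → α → Prop
  | 0, x, y => x = y
  | k + 1, x, y => ∃ z, step x z ∧ ReachIn step k z y

/-- The reversal distance of a permutation from the identity. -/
noncomputable def rd (π : List ℕ) : ℕ :=
  sInf {k | ReachIn RevStep k π (idPerm π.length)}

/-- The prefix reversal distance of a permutation from the identity. -/
noncomputable def prd (π : List ℕ) : ℕ :=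
  sInf {k | ReachIn PrefRevStep k π (idPerm π.length)}

/-- The ball of radius `k` in the reversal model. -/
def Brd (k : ℕ) : Set (List ℕ) := {π | IsPermList π ∧ rd π ≤ k}

/-- The ball of radius `k` in the prefix reversal model. -/
def Bprd (k : ℕ) : Set (List ℕ) := {π | IsPermList π ∧ prd π ≤ k}

/-! ## Peg permutations: oriented reversals and distances -/

def flipDeco : Deco → Deco
  | Deco.plus => Deco.minus
  | Deco.minus => Deco.plus
  | Deco.dot => Deco.dot

/-- Oriented reversal of the segment from position `i` to `j` (0-indexed) of a peg
permutation: the segment is reversed and the decorations `+`, `-` are swapped. -/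
def pegSegReverse (l : PegPerm) (i j : ℕ) : PegPerm :=
  l.take i ++ (((l.drop i).take (j + 1 - i)).map (fun p => (p.1, flipDeco p.2))).reverse
    ++ l.drop (j + 1)

/-- One oriented reversal step on peg permutations. -/
def PegRevStep (l l' : PegPerm) : Prop :=
  ∃ i j, i ≤ j ∧ j < l.length ∧ l' = pegSegReverse l i j

/-- One oriented prefix reversal step on peg permutations. -/
def PegPrefRevStep (l l' : PegPerm) : Prop :=
  ∃ j, j < l.length ∧ l' = pegSegReverse l 0 j

/-- The underlying list of a peg permutation is a permutation. -/
def IsPegPermList (l : PegPerm) : Prop := IsPermList (l.map Prod.fst)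

/-- An identity peg permutation: underlying identity, every decoration `+` or `•`. -/
def IsIdPeg (l : PegPerm) : Prop :=
  l.map Prod.fst = idPerm l.length ∧ ∀ p ∈ l, p.2 ≠ Deco.minus

/-- The reversal distance of a peg permutation from an identity peg permutation. -/
noncomputable def pegRd (l : PegPerm) : ℕ :=
  sInf {k | ∃ m, IsIdPeg m ∧ ReachIn PegRevStep k l m}

/-- The prefix reversal distance of a peg permutation from an identity peg permutation. -/
noncomputable def pegPrd (l : PegPerm) : ℕ :=
  sInf {k | ∃ m, IsIdPeg m ∧ ReachIn PegPrefRevStep k l m}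

/-- The ball of radius `k` of peg permutations in the reversal model. -/
def PegBrd (k : ℕ) : Set PegPerm := {l | IsPegPermList l ∧ pegRd l ≤ k}

/-- The ball of radius `k` of peg permutations in the prefix reversal model. -/
def PegBprd (k : ℕ) : Set PegPerm := {l | IsPegPermList l ∧ pegPrd l ≤ k}

/-! ## Patterns -/

/-- Two lists of the same length are order-isomorphic. -/
def OrderIsoList (s t : List ℕ) : Prop :=
  s.length = t.length ∧
  ∀ i j, i < s.length → j < s.length → (s.getD i 0 < s.getD j 0 ↔ t.getD i 0 < t.getD j 0)

/-- `σ` is a (classical) pattern of `τ`. -/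
def IsPattern (σ τ : List ℕ) : Prop :=
  ∃ s, s.Sublist τ ∧ OrderIsoList s σ

/-- `σ` is a peg pattern of `τ`: some subsequence of `τ` is order-isomorphic to `σ`
and whenever an entry of the subsequence is decorated `+` (resp. `-`), the
corresponding entry of `σ` is decorated `+` (resp. `-`). -/
def IsPegPattern (σ τ : PegPerm) : Prop :=
  ∃ s : PegPerm, s.Sublist τ ∧ OrderIsoList (s.map Prod.fst) (σ.map Prod.fst) ∧
    ∀ i, i < s.length →
      ((s.getD i pegDefault).2 = Deco.plus → (σ.getD i pegDefault).2 = Deco.plus) ∧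
      ((s.getD i pegDefault).2 = Deco.minus → (σ.getD i pegDefault).2 = Deco.minus)

/-! ## Strips, clean compact and compact peg permutations -/

/-- Two adjacent entries of a peg permutation lie in a common strip. -/
def StripPair (p q : ℕ × Deco) : Prop :=
  (q.1 = p.1 + 1 ∧ p.2 ≠ Deco.minus ∧ q.2 ≠ Deco.minus) ∨
  (p.1 = q.1 + 1 ∧ p.2 ≠ Deco.plus ∧ q.2 ≠ Deco.plus)

/-- A peg permutation is clean compact when all its strips have length 1, i.e. no two
adjacent entries lie in a common strip. -/
def CleanCompact (l : PegPerm) : Prop :=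
  ∀ i, i + 1 < l.length → ¬ StripPair (l.getD i pegDefault) (l.getD (i + 1) pegDefault)

/-- A peg permutation is compact when every strip has length 1 or consists
exclusively of entries decorated `•`. -/
def CompactPeg (l : PegPerm) : Prop :=
  ∀ i, i + 1 < l.length → StripPair (l.getD i pegDefault) (l.getD (i + 1) pegDefault) →
    (l.getD i pegDefault).2 = Deco.dot ∧ (l.getD (i + 1) pegDefault).2 = Deco.dot

/-! ## The clean compact peg permutation `peg(γ)` associated with a permutation -/

/-- The decomposition of a permutation into maximal monotone strips of adjacent values. -/
def stripGroups (γ : List ℕ) : List (List ℕ) :=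
  γ.splitBy (fun a b => b == a + 1 || a == b + 1)

def stripMin (s : List ℕ) : ℕ := s.foldr min (s.headD 0)

def stripDeco (s : List ℕ) : Deco :=
  if s.length ≤ 1 then Deco.dot
  else if s.headD 0 < s.getLastD 0 then Deco.plus
  else Deco.minus

/-- Rank of `v` among `vals` (used for rescaling). -/
def rankIn (vals : List ℕ) (v : ℕ) : ℕ := (vals.filter (fun w => w ≤ v)).length

/-- The clean compact peg permutation associated with a permutation: replace each
strip by its minimum, decorated `+`/`-`/`•` according to the kind of strip, and rescale. -/
def pegOf (γ : List ℕ) : PegPerm :=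
  (stripGroups γ).map (fun s => (rankIn ((stripGroups γ).map stripMin) (stripMin s), stripDeco s))

/-! ## Monotone inflations and grid classes -/

/-- A legal inflation vector for a peg permutation. -/
def LegalVec (πε : PegPerm) (v : List ℕ) : Prop :=
  v.length = πε.length ∧
  ∀ i, i < πε.length → (πε.getD i pegDefault).2 = Deco.dot → v.getD i 0 ≤ 1

/-- The values of the `i`-th block of the monotone inflation of `πε` through `v`:
an increasing (resp. decreasing) run of `vᵢ` values, occupying the interval of values
determined by the relative order of the entries of `πε`. -/
def blockVals (πε : PegPerm) (v : List ℕ) (i : ℕ) : List ℕ :=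
  let off := (((List.range πε.length).filter
      (fun j => (πε.getD j pegDefault).1 < (πε.getD i pegDefault).1)).map
      (fun j => v.getD j 0)).sum
  if (πε.getD i pegDefault).2 = Deco.minus then (List.range' (off + 1) (v.getD i 0)).reverse
  else List.range' (off + 1) (v.getD i 0)

/-- The monotone inflation `πε[v]`. -/
def inflate (πε : PegPerm) (v : List ℕ) : List ℕ :=
  ((List.range πε.length).map (blockVals πε v)).flatten

/-- The grid class of a peg permutation: all its monotone inflations through legal
inflation vectors. -/
def GridOf (πε : PegPerm) : Set (List ℕ) :=
  {γ | ∃ v, LegalVec πε v ∧ γ = inflate πε v}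

/-- Compatibility of decorations in peg monotone inflations: a `+` entry is inflated by
an identity peg permutation (decorations `+`/`•`), a `-` entry by a reverse identity peg
permutation (decorations `-`/`•`), a `•` entry stays `•`. -/
def DecoOK : Deco → Deco → Prop
  | Deco.plus, d => d ≠ Deco.minus
  | Deco.minus, d => d ≠ Deco.plus
  | Deco.dot, d => d = Deco.dot

/-- The peg grid class of a peg permutation: all its peg monotone inflations. -/
def GridPegOf (πε : PegPerm) : Set PegPerm :=
  {γ | ∃ v, LegalVec πε v ∧ ∃ bs : List PegPerm,
    bs.length = πε.length ∧ γ = bs.flatten ∧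
    ∀ i, i < πε.length →
      (bs.getD i []).map Prod.fst = blockVals πε v i ∧
      ∀ p ∈ bs.getD i [], DecoOK (πε.getD i pegDefault).2 p.2}

/-! ## The inflation `π^ε_I` and the permutation `π̃^ε_I` -/

/-- Canonical peg inflation: every inflated entry keeps the decoration of the
original one. -/
def pegInflate (πε : PegPerm) (v : List ℕ) : PegPerm :=
  ((List.range πε.length).map
    (fun i => (blockVals πε v i).map (fun x => (x, (πε.getD i pegDefault).2)))).flatten

/-- The inflation vector associated with the multiset `I = {i, j}` (0-indexed):
entries `i` and `j` are inflated by one more element each. -/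
def inflVec (n i j : ℕ) : List ℕ :=
  (List.range n).map (fun l => 1 + (if l = i then 1 else 0) + (if l = j then 1 else 0))

/-- `π^ε_I` where `I = {i, j}` with `i ≤ j` 0-indexed. -/
def pegI (πε : PegPerm) (i j : ℕ) : PegPerm := pegInflate πε (inflVec πε.length i j)

/-- `π̃^ε_I`: the result of applying to `π^ε_I` the oriented reversal of the segment
of (0-indexed) positions `i+1, …, j+1`. -/
def pegITilde (πε : PegPerm) (i j : ℕ) : PegPerm := pegSegReverse (pegI πε i j) (i + 1) (j + 1)

/-! ## Clean compact peg bases -/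

/-- The clean compact peg basis of a set `B` of peg permutations: the clean compact
peg permutations not in `B` all of whose proper clean compact peg patterns are in `B`. -/
def CCPegBasis (B : Set PegPerm) : Set PegPerm :=
  {πε | IsPegPermList πε ∧ CleanCompact πε ∧ πε ∉ B ∧
    ∀ γ, IsPegPermList γ → CleanCompact γ → IsPegPattern γ πε → γ ≠ πε → γ ∈ B}

/-! ## The exceptional peg permutations for the prefix reversal model -/

/-- `Θ_e(n)` for even `n`:  `n• (n−2)• ⋯ 4• 2• 1⁺ 3• ⋯ (n−3)• (n−1)•`. -/
def ThetaE (n : ℕ) : PegPerm :=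
  ((List.range (n / 2)).map (fun i => (n - 2 * i, Deco.dot))) ++ [(1, Deco.plus)] ++
  ((List.range (n / 2 - 1)).map (fun i => (3 + 2 * i, Deco.dot)))

/-- `Θ_o(n)` for odd `n`:  `n• (n−2)• ⋯ 3• 1⁻ 2• 4• ⋯ (n−3)• (n−1)•`. -/
def ThetaO (n : ℕ) : PegPerm :=
  ((List.range ((n - 1) / 2)).map (fun i => (n - 2 * i, Deco.dot))) ++ [(1, Deco.minus)] ++
  ((List.range ((n - 1) / 2)).map (fun i => (2 + 2 * i, Deco.dot)))

/-- `Λ_e(n)` for even `n` and `t = n/2`:  `(t+1)⁺ t• (t+2)• (t−1)• ⋯ (n−1)• 2• n• 1•`. -/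
def LambdaE (n : ℕ) : PegPerm :=
  (List.range (n / 2)).flatMap
    (fun i => [(n / 2 + 1 + i, if i = 0 then Deco.plus else Deco.dot), (n / 2 - i, Deco.dot)])

/-- `Λ_o(n)` for odd `n` and `t = (n+1)/2`:  `t⁻ (t+1)• (t−1)• (t+2)• ⋯ (n−1)• 2• n• 1•`. -/
def LambdaO (n : ℕ) : PegPerm :=
  ((n + 1) / 2, Deco.minus) ::
    (List.range ((n + 1) / 2 - 1)).flatMap
      (fun i => [((n + 1) / 2 + 1 + i, Deco.dot), ((n + 1) / 2 - 1 - i, Deco.dot)])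

/-! ## Auxiliary machinery for Statement 9 -/

section Statement9Aux
open List

/-- Rescaling of values after deleting the value `u`. -/
def rescale (u x : ℕ) : ℕ := if u < x then x - 1 else x

lemma rescale_cases (u x : ℕ) :
    (¬ u < x ∧ rescale u x = x) ∨ (u < x ∧ rescale u x = x - 1) := by
  unfold rescale; split
  · exact Or.inr ⟨‹_›, rfl⟩
  · exact Or.inl ⟨‹_›, rfl⟩

lemma rescale_lt_iff {u x y : ℕ} (hx : x ≠ u) (hy : y ≠ u) :
    rescale u x < rescale u y ↔ x < y := by
  unfold rescale; split <;> split <;> omega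

lemma rescale_succ_cases {u x y : ℕ} (hx : x ≠ u) (hy : y ≠ u)
    (h : rescale u y = rescale u x + 1) : y = x + 1 ∨ (x + 1 = u ∧ y = u + 1) := by
  unfold rescale at h; split at h <;> split at h <;> omega

/-- Specialize the decoration of the (unique) entry with value `w` from `•` to `D`. -/
def specOf (w : ℕ) (D : Deco) (p : ℕ × Deco) : Deco :=
  if p.1 = w ∧ p.2 = Deco.dot then D else p.2

lemma specOf_ok (w : ℕ) (D : Deco) : ∀ p, specOf w D p = p.2 ∨ p.2 = Deco.dot := by
  intro p; unfold specOf; split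
  · exact Or.inr (by tauto)
  · exact Or.inl rfl

lemma specOf_pos {w : ℕ} {D : Deco} {p : ℕ × Deco} (h1 : p.1 = w) (h2 : p.2 = Deco.dot) :
    specOf w D p = D := by unfold specOf; rw [if_pos ⟨h1, h2⟩]

lemma specOf_neg₁ {w : ℕ} {D : Deco} {p : ℕ × Deco} (h : p.1 ≠ w) :
    specOf w D p = p.2 := by unfold specOf; rw [if_neg (by tauto)]

lemma spec_ne_of {spec : ℕ × Deco → Deco} (hsp : ∀ p, spec p = p.2 ∨ p.2 = Deco.dot)
    {p : ℕ × Deco} {D : Deco} (hD : D ≠ Deco.dot) (h : spec p ≠ D) : p.2 ≠ D := by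
  rcases hsp p with h' | h'
  · rw [← h']; exact h
  · rw [h']; exact fun hc => hD hc.symm

lemma deco_eq_plus {d : Deco} (h1 : d ≠ Deco.minus) (h2 : d ≠ Deco.dot) : d = Deco.plus := by
  cases d <;> simp_all

lemma deco_eq_minus {d : Deco} (h1 : d ≠ Deco.plus) (h2 : d ≠ Deco.dot) : d = Deco.minus := by
  cases d <;> simp_all

lemma stripPair_cases {a b : ℕ} {da db : Deco} (h : StripPair (a, da) (b, db)) :
    (b = a + 1 ∧ da ≠ Deco.minus ∧ db ≠ Deco.minus) ∨
    (a = b + 1 ∧ da ≠ Deco.plus ∧ db ≠ Deco.plus) := h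

lemma map_eraseIdx' {α β : Type*} (f : α → β) :
    ∀ (l : List α) (i : ℕ), (l.eraseIdx i).map f = (l.map f).eraseIdx i
  | [], _ => by simp
  | _ :: _, 0 => by simp
  | a :: l, (i+1) => by
      simp only [List.eraseIdx_cons_succ, List.map_cons, map_eraseIdx' f l i]

lemma erase_map_rescale (n u : ℕ) (h1 : 1 ≤ u) (h2 : u ≤ n) :
    ((List.range' 1 n).erase u).map (rescale u) = List.range' 1 (n-1) := by
  have e1 : 1 + 1 * (u - 1) = u := by omega
  have hsplit0 : List.range' 1 (u-1) ++ List.range' (1 + 1 * (u-1)) (n-u+1)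
      = List.range' 1 ((n-u+1) + (u-1)) := by
    rw [List.range'_append]; congr 1; omega
  rw [e1] at hsplit0
  have e2 : (n - u + 1) + (u - 1) = n := by omega
  rw [e2] at hsplit0
  have hsplit : List.range' 1 n = List.range' 1 (u-1) ++ (u :: List.range' (u+1) (n-u)) := by
    rw [← hsplit0, List.range'_succ]
  rw [hsplit, List.erase_append_right _ (by
      intro hmem; rw [List.mem_range'_1] at hmem; omega),
    List.erase_cons_head, List.map_append]
  have hmap1 : (List.range' 1 (u-1)).map (rescale u) = List.range' 1 (u-1) := by
    have h' : ∀ x ∈ List.range' 1 (u-1), rescale u x = id x := by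
      intro x hx; rw [List.mem_range'_1] at hx
      unfold rescale; rw [if_neg (by omega)]; rfl
    rw [List.map_congr_left h', List.map_id]
  have hmap2 : ∀ (k s : ℕ), u < s →
      (List.range' s k).map (rescale u) = List.range' (s-1) k := by
    intro k
    induction k with
    | zero => intro s _; simp
    | succ k ih =>
      intro s hs
      rw [List.range'_succ, List.map_cons, ih (s+1) (by omega), List.range'_succ]
      have h1' : rescale u s = s - 1 := by unfold rescale; rw [if_pos hs]
      have h2' : s + 1 - 1 = s := by omega
      have h3' : s - 1 + 1 = s := by omega
      rw [h1', h2', h3']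
  rw [hmap1, hmap2 (n-u) (u+1) (by omega)]
  have h4 : u + 1 - 1 = u := by omega
  rw [h4]
  have hsplit1 := List.range'_append (s := 1) (m := u-1) (n := n-u) (step := 1)
  rw [e1] at hsplit1
  rw [hsplit1]
  congr 1
  omega

lemma perm_facts (π : PegPerm) (n : ℕ) (hn : π.length = n) (h0 : IsPegPermList π) :
    (∀ i, i < n → 1 ≤ (π.getD i pegDefault).1 ∧ (π.getD i pegDefault).1 ≤ n) ∧
    (∀ i j, i < n → j < n →
      (π.getD i pegDefault).1 = (π.getD j pegDefault).1 → i = j) := by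
  have hLlen : (π.map Prod.fst).length = n := by rw [List.length_map, hn]
  have hperm : (π.map Prod.fst).Perm (List.range' 1 n) := by
    have h0' := h0
    unfold IsPegPermList IsPermList idPerm at h0'
    rwa [hLlen] at h0'
  have hL : ∀ i, (h : i < n) →
      (π.map Prod.fst)[i]'(by omega) = (π.getD i pegDefault).1 := by
    intro i h
    rw [List.getElem_map, List.getD_eq_getElem _ _ (show i < π.length by omega)]
  constructor
  · intro i hi
    have hmem : (π.map Prod.fst)[i]'(by omega) ∈ π.map Prod.fst :=
      List.getElem_mem _
    rw [hL i hi] at hmem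
    have hmem2 := hperm.mem_iff.mp hmem
    rw [List.mem_range'_1] at hmem2
    omega
  · intro i j hi hj hij
    have hnd : (π.map Prod.fst).Nodup := hperm.nodup_iff.mpr List.nodup_range'
    exact (List.Nodup.getElem_inj_iff hnd (hi := by omega) (hj := by omega)).mp
      (by rw [hL i hi, hL j hj]; exact hij)

/-- The main deletion lemma: delete the entry at index `t` (of value `u`),
rescale the values, apply a dot-specialization `spec`. -/
lemma main_del (π : PegPerm) (n t u : ℕ) (hn : π.length = n) (ht : t < n)
    (h0 : IsPegPermList π) (h1 : CleanCompact π)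
    (hu : (π.getD t pegDefault).1 = u)
    (spec : ℕ × Deco → Deco) (hsp : ∀ p, spec p = p.2 ∨ p.2 = Deco.dot)
    (Hm : 1 ≤ t → t + 1 < n →
      ¬ StripPair (rescale u (π.getD (t-1) pegDefault).1, spec (π.getD (t-1) pegDefault))
        (rescale u (π.getD (t+1) pegDefault).1, spec (π.getD (t+1) pegDefault)))
    (Hv : ∀ i, i + 1 < n → i ≠ t → i + 1 ≠ t →
      ¬ StripPair (rescale u (π.getD i pegDefault).1, spec (π.getD i pegDefault))
        (rescale u (π.getD (i+1) pegDefault).1, spec (π.getD (i+1) pegDefault))) :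
    ∃ γδ : PegPerm, IsPegPermList γδ ∧ CleanCompact γδ ∧ γδ.length = n - 1 ∧
      IsPegPattern γδ π := by
  obtain ⟨hval, hinj⟩ := perm_facts π n hn h0
  have hu1 : 1 ≤ u := hu ▸ (hval t ht).1
  have hu2 : u ≤ n := hu ▸ (hval t ht).2
  have hlE : (π.eraseIdx t).length = n - 1 := by
    rw [List.length_eraseIdx, hn, if_pos ht]
  have hs_get : ∀ i, i < n - 1 → (π.eraseIdx t).getD i pegDefault
      = π.getD (if i < t then i else i + 1) pegDefault := by
    intro i hi
    have hi' : i < (π.eraseIdx t).length := by omega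
    rw [List.getD_eq_getElem _ _ hi', List.getElem_eraseIdx]
    by_cases hit : i < t
    · rw [dif_pos hit, if_pos hit,
        List.getD_eq_getElem _ _ (show i < π.length by omega)]
    · rw [dif_neg hit, if_neg hit,
        List.getD_eq_getElem _ _ (show i + 1 < π.length by omega)]
  have hγget : ∀ i, i < n - 1 →
      ((π.eraseIdx t).map (fun p => (rescale u p.1, spec p))).getD i pegDefault
        = (rescale u ((π.eraseIdx t).getD i pegDefault).1,
            spec ((π.eraseIdx t).getD i pegDefault)) := by
    intro i hi
    have hi' : i < (π.eraseIdx t).length := by omega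
    rw [List.getD_eq_getElem _ _ (by rw [List.length_map]; exact hi'),
      List.getElem_map, List.getD_eq_getElem _ _ hi']
  have hsneq : ∀ i, i < n - 1 → ((π.eraseIdx t).getD i pegDefault).1 ≠ u := by
    intro i hi hc
    rw [hs_get i hi] at hc
    by_cases hit : i < t
    · rw [if_pos hit] at hc
      have := hinj i t (by omega) ht (by rw [hc, hu])
      omega
    · rw [if_neg hit] at hc
      have := hinj (i+1) t (by omega) ht (by rw [hc, hu])
      omega
  refine ⟨(π.eraseIdx t).map (fun p => (rescale u p.1, spec p)), ?_, ?_, ?_, ?_⟩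
  · -- IsPegPermList
    have hmapfst : ((π.eraseIdx t).map (fun p => (rescale u p.1, spec p))).map Prod.fst
        = ((π.map Prod.fst).eraseIdx t).map (rescale u) := by
      rw [← map_eraseIdx', List.map_map, List.map_map]
      rfl
    have hLlen : (π.map Prod.fst).length = n := by rw [List.length_map, hn]
    have hperm : (π.map Prod.fst).Perm (List.range' 1 n) := by
      have h0' := h0
      unfold IsPegPermList IsPermList idPerm at h0'
      rwa [hLlen] at h0'
    have htL : t < (π.map Prod.fst).length := by omega
    have hLt : (π.map Prod.fst)[t]'htL = u := by
      rw [List.getElem_map, ← hu, List.getD_eq_getElem _ _ (show t < π.length by omega)]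
    have hpermE : ((π.map Prod.fst).eraseIdx t).Perm ((List.range' 1 n).erase u) := by
      have h1' := List.erase_getElem htL
      rw [hLt] at h1'
      exact h1'.symm.trans (hperm.erase u)
    unfold IsPegPermList IsPermList
    rw [hmapfst]
    have hlen3 : (((π.map Prod.fst).eraseIdx t).map (rescale u)).length = n - 1 := by
      rw [List.length_map, List.length_eraseIdx, hLlen, if_pos (by omega)]
    rw [hlen3]
    unfold idPerm
    exact (hpermE.map (rescale u)).trans
      (erase_map_rescale n u hu1 hu2 ▸ List.Perm.refl _)
  · -- CleanCompact
    intro i hi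
    rw [List.length_map, hlE] at hi
    rw [hγget i (by omega), hγget (i+1) (by omega),
      hs_get i (by omega), hs_get (i+1) (by omega)]
    by_cases h1t : i + 1 < t
    · rw [if_pos (by omega : i < t), if_pos h1t]
      exact Hv i (by omega) (by omega) (by omega)
    · by_cases h2t : i + 1 = t
      · rw [if_pos (by omega : i < t), if_neg (by omega : ¬ i + 1 < t)]
        have hHm := Hm (by omega) (by omega)
        have e1 : t - 1 = i := by omega
        have e2 : t + 1 = i + 1 + 1 := by omega
        rw [e1, e2] at hHm
        exact hHm
      · rw [if_neg (by omega : ¬ i < t), if_neg (by omega : ¬ i + 1 < t)]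
        exact Hv (i+1) (by omega) (by omega) (by omega)
  · rw [List.length_map, hlE]
  · -- IsPegPattern
    refine ⟨π.eraseIdx t, List.eraseIdx_sublist _ _, ⟨?_, ?_⟩, ?_⟩
    · simp
    · intro i j hi hj
      rw [List.length_map, hlE] at hi hj
      have hfst : ∀ k, k < n - 1 → ((π.eraseIdx t).map Prod.fst).getD k 0
          = ((π.eraseIdx t).getD k pegDefault).1 := by
        intro k hk
        have hk' : k < (π.eraseIdx t).length := by omega
        rw [List.getD_eq_getElem _ _ (by rw [List.length_map]; exact hk'),
          List.getElem_map, List.getD_eq_getElem _ _ hk']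
      have hfstγ : ∀ k, k < n - 1 →
          ((((π.eraseIdx t).map (fun p => (rescale u p.1, spec p))).map Prod.fst).getD k 0)
            = rescale u ((π.eraseIdx t).getD k pegDefault).1 := by
        intro k hk
        have hk' : k < (π.eraseIdx t).length := by omega
        rw [List.getD_eq_getElem _ _ (by rw [List.length_map, List.length_map]; exact hk'),
          List.getElem_map, List.getElem_map, List.getD_eq_getElem _ _ hk']
      rw [hfst i hi, hfst j hj, hfstγ i hi, hfstγ j hj]
      exact (rescale_lt_iff (hsneq i hi) (hsneq j hj)).symm
    · intro i hi
      rw [hlE] at hi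
      rw [hγget i (by omega)]
      constructor
      · intro h
        show spec _ = Deco.plus
        rcases hsp ((π.eraseIdx t).getD i pegDefault) with h' | h'
        · rw [h', h]
        · rw [h'] at h; exact absurd h (by decide)
      · intro h
        show spec _ = Deco.minus
        rcases hsp ((π.eraseIdx t).getD i pegDefault) with h' | h'
        · rw [h', h]
        · rw [h'] at h; exact absurd h (by decide)

/-- Reduce the `Hv` hypothesis of `main_del` to the two exceptional situations. -/
lemma hv_of_exceptions (π : PegPerm) (n s u : ℕ) (hn : π.length = n)
    (hcc : CleanCompact π) (hs : s < n) (hus : (π.getD s pegDefault).1 = u)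
    (hinj : ∀ i j, i < n → j < n →
      (π.getD i pegDefault).1 = (π.getD j pegDefault).1 → i = j)
    (spec : ℕ × Deco → Deco) (hsp : ∀ p, spec p = p.2 ∨ p.2 = Deco.dot)
    (e1 : ∀ i, i + 1 < n → i ≠ s → i + 1 ≠ s → (π.getD i pegDefault).1 + 1 = u →
      (π.getD (i+1) pegDefault).1 = u + 1 → spec (π.getD i pegDefault) ≠ Deco.minus →
      spec (π.getD (i+1) pegDefault) ≠ Deco.minus → False)
    (e2 : ∀ i, i + 1 < n → i ≠ s → i + 1 ≠ s → (π.getD (i+1) pegDefault).1 + 1 = u →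
      (π.getD i pegDefault).1 = u + 1 → spec (π.getD i pegDefault) ≠ Deco.plus →
      spec (π.getD (i+1) pegDefault) ≠ Deco.plus → False) :
    ∀ i, i + 1 < n → i ≠ s → i + 1 ≠ s →
      ¬ StripPair (rescale u (π.getD i pegDefault).1, spec (π.getD i pegDefault))
        (rescale u (π.getD (i+1) pegDefault).1, spec (π.getD (i+1) pegDefault)) := by
  intro i hi his hi1s hstrip
  have hne1 : (π.getD i pegDefault).1 ≠ u := fun hc =>
    his (hinj i s (by omega) hs (by rw [hc, hus]))
  have hne2 : (π.getD (i+1) pegDefault).1 ≠ u := fun hc =>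
    hi1s (hinj (i+1) s (by omega) hs (by rw [hc, hus]))
  rcases stripPair_cases hstrip with ⟨h1', h2', h3'⟩ | ⟨h1', h2', h3'⟩
  · rcases rescale_succ_cases hne1 hne2 h1' with h' | ⟨ha, hb⟩
    · exact hcc i (by omega) (Or.inl ⟨h',
        spec_ne_of hsp (by decide) h2', spec_ne_of hsp (by decide) h3'⟩)
    · exact e1 i hi his hi1s ha hb h2' h3'
  · rcases rescale_succ_cases hne2 hne1 h1' with h' | ⟨ha, hb⟩
    · exact hcc i (by omega) (Or.inr ⟨h',
        spec_ne_of hsp (by decide) h2', spec_ne_of hsp (by decide) h3'⟩)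
    · exact e2 i hi his hi1s ha hb h2' h3'

end Statement9Aux

/-- every clean compact peg permutation of length `n ≥ 2` contains a
clean compact peg pattern of length `n - 1`. -/
theorem cleanCompact_has_cleanCompact_pattern (πε : PegPerm) (n : ℕ)
    (hn : πε.length = n) (h2 : 2 ≤ n)
    (h0 : IsPegPermList πε) (h1 : CleanCompact πε) :
    ∃ γδ : PegPerm, IsPegPermList γδ ∧ CleanCompact γδ ∧ γδ.length = n - 1 ∧
      IsPegPattern γδ πε := by
  classical
  obtain ⟨hval, hinj⟩ := perm_facts πε n hn h0
  obtain ⟨t, htn, hte⟩ : ∃ t, t < n ∧ (πε.getD t pegDefault).1 = n := by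
    have hLlen : (πε.map Prod.fst).length = n := by rw [List.length_map, hn]
    have hperm : (πε.map Prod.fst).Perm (List.range' 1 n) := by
      have h0' := h0
      unfold IsPegPermList IsPermList idPerm at h0'
      rwa [hLlen] at h0'
    have hmem : n ∈ πε.map Prod.fst :=
      hperm.mem_iff.mpr (by rw [List.mem_range'_1]; omega)
    obtain ⟨i, hilen, hie⟩ := List.mem_iff_getElem.mp hmem
    rw [hLlen] at hilen
    refine ⟨i, hilen, ?_⟩
    rw [List.getD_eq_getElem _ _ (show i < πε.length by omega)]
    rw [List.getElem_map] at hie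
    exact hie
  have hresn : ∀ x : ℕ, x ≤ n → rescale n x = x := by
    intro x hx; unfold rescale; rw [if_neg (by omega)]
  have etriv1 : ∀ (spec : ℕ × Deco → Deco), ∀ i, i + 1 < n → i ≠ t → i + 1 ≠ t →
      (πε.getD i pegDefault).1 + 1 = n → (πε.getD (i+1) pegDefault).1 = n + 1 →
      spec (πε.getD i pegDefault) ≠ Deco.minus →
      spec (πε.getD (i+1) pegDefault) ≠ Deco.minus → False := by
    intro spec i hi _ _ _ hq _ _
    have := (hval (i+1) (by omega)).2
    omega
  have etriv2 : ∀ (spec : ℕ × Deco → Deco), ∀ i, i + 1 < n → i ≠ t → i + 1 ≠ t →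
      (πε.getD (i+1) pegDefault).1 + 1 = n → (πε.getD i pegDefault).1 = n + 1 →
      spec (πε.getD i pegDefault) ≠ Deco.plus →
      spec (πε.getD (i+1) pegDefault) ≠ Deco.plus → False := by
    intro spec i hi _ _ _ hq _ _
    have := (hval i (by omega)).2
    omega
  by_cases hB : 1 ≤ t ∧ t + 1 < n ∧
      StripPair (πε.getD (t-1) pegDefault) (πε.getD (t+1) pegDefault)
  · obtain ⟨ht1, ht2, hXY⟩ := hB
    have hXb := hval (t-1) (by omega)
    have hYb := hval (t+1) (by omega)
    have hXn : (πε.getD (t-1) pegDefault).1 ≠ n := fun hc => by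
      have := hinj (t-1) t (by omega) htn (by rw [hc, hte]); omega
    have hYn : (πε.getD (t+1) pegDefault).1 ≠ n := fun hc => by
      have := hinj (t+1) t (by omega) htn (by rw [hc, hte]); omega
    have hXY' : (πε.getD (t-1) pegDefault).1 ≠ (πε.getD (t+1) pegDefault).1 := fun hc => by
      have := hinj (t-1) (t+1) (by omega) (by omega) hc; omega
    rcases hXY with ⟨hv, hxm, hym⟩ | ⟨hv, hxp, hyp⟩
    · -- increasing strip pair around the maximum
      by_cases hxd : (πε.getD (t-1) pegDefault).2 = Deco.dot
      · refine main_del πε n t n hn htn h0 h1 hte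
          (specOf (πε.getD (t-1) pegDefault).1 Deco.minus) (specOf_ok _ _) ?_ ?_
        · intro _ _ hstrip
          rcases stripPair_cases hstrip with ⟨_, hp', _⟩ | ⟨hv', _, _⟩
          · exact hp' (specOf_pos rfl hxd)
          · rw [hresn _ hXb.2, hresn _ hYb.2] at hv'; omega
        · exact hv_of_exceptions πε n t n hn h1 htn hte hinj _ (specOf_ok _ _)
            (etriv1 _) (etriv2 _)
      · have hxP : (πε.getD (t-1) pegDefault).2 = Deco.plus := deco_eq_plus hxm hxd
        by_cases hyd : (πε.getD (t+1) pegDefault).2 = Deco.dot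
        · refine main_del πε n t n hn htn h0 h1 hte
            (specOf (πε.getD (t+1) pegDefault).1 Deco.minus) (specOf_ok _ _) ?_ ?_
          · intro _ _ hstrip
            rcases stripPair_cases hstrip with ⟨_, _, hq'⟩ | ⟨hv', _, _⟩
            · exact hq' (specOf_pos rfl hyd)
            · rw [hresn _ hXb.2, hresn _ hYb.2] at hv'; omega
          · exact hv_of_exceptions πε n t n hn h1 htn hte hinj _ (specOf_ok _ _)
              (etriv1 _) (etriv2 _)
        · have hyP : (πε.getD (t+1) pegDefault).2 = Deco.plus := deco_eq_plus hym hyd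
          by_cases hCm : t + 2 < n ∧ (πε.getD (t+2) pegDefault).1 + 1 = n ∧
              (πε.getD t pegDefault).2 ≠ Deco.plus ∧
              (πε.getD (t+2) pegDefault).2 ≠ Deco.plus
          · obtain ⟨hCm1, hCm2, hCm3, hCm4⟩ := hCm
            have hC2b := hval (t+2) (by omega)
            have hC2n : (πε.getD (t+2) pegDefault).1 ≠ n := fun hc => by
              have := hinj (t+2) t (by omega) htn (by rw [hc, hte]); omega
            have hC2Y : (πε.getD (t+2) pegDefault).1 ≠ (πε.getD (t+1) pegDefault).1 :=
              fun hc => by have := hinj (t+2) (t+1) (by omega) (by omega) hc; omega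
            have hC2X : (πε.getD (t+2) pegDefault).1 ≠ (πε.getD (t-1) pegDefault).1 :=
              fun hc => by have := hinj (t+2) (t-1) (by omega) (by omega) hc; omega
            by_cases hEd : (πε.getD t pegDefault).2 = Deco.dot
            · -- iii-2a : delete t+1, specialize the maximum entry to plus
              refine main_del πε n (t+1) (πε.getD (t+1) pegDefault).1 hn ht2 h0 h1 rfl
                (specOf n Deco.plus) (specOf_ok _ _) ?_ ?_
              · intro hm1 hm2
                rw [show t+1-1 = t from by omega, show t+1+1 = t+2 from by omega]
                intro hstrip
                rcases stripPair_cases hstrip with ⟨hv', _, _⟩ | ⟨_, hp', _⟩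
                · have hrE : rescale (πε.getD (t+1) pegDefault).1
                      (πε.getD t pegDefault).1 = n - 1 := by
                    rw [hte]; unfold rescale; rw [if_pos (by omega)]
                  rw [hrE] at hv'
                  rcases rescale_cases (πε.getD (t+1) pegDefault).1
                      (πε.getD (t+2) pegDefault).1 with ⟨h', he⟩ | ⟨h', he⟩ <;>
                    rw [he] at hv' <;> omega
                · exact hp' (specOf_pos hte hEd)
              · refine hv_of_exceptions πε n (t+1) _ hn h1 ht2 rfl hinj _
                  (specOf_ok _ _) ?_ ?_
                · intro i hi his hi1s hp hq hsp1 hsp2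
                  have hieq : i = t - 1 := hinj i (t-1) (by omega) (by omega) (by omega)
                  subst hieq
                  rw [show t-1+1 = t from by omega] at hq hsp2
                  have := hinj (t+2) (t+1) (by omega) (by omega) (by omega)
                  omega
                · intro i hi his hi1s hp hq hsp1 hsp2
                  have hieq : i + 1 = t - 1 := hinj (i+1) (t-1) (by omega) (by omega) (by omega)
                  rw [hieq] at hsp2
                  rw [specOf_neg₁ hXn] at hsp2
                  exact hsp2 hxP
            · have hEM : (πε.getD t pegDefault).2 = Deco.minus := deco_eq_minus hCm3 hEd
              by_cases hC2d : (πε.getD (t+2) pegDefault).2 = Deco.dot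
              · -- iii-2b : delete t+1, specialize the (n-1)-entry to plus
                refine main_del πε n (t+1) (πε.getD (t+1) pegDefault).1 hn ht2 h0 h1 rfl
                  (specOf (πε.getD (t+2) pegDefault).1 Deco.plus) (specOf_ok _ _) ?_ ?_
                · intro hm1 hm2
                  rw [show t+1-1 = t from by omega, show t+1+1 = t+2 from by omega]
                  intro hstrip
                  rcases stripPair_cases hstrip with ⟨hv', _, _⟩ | ⟨_, _, hq'⟩
                  · have hrE : rescale (πε.getD (t+1) pegDefault).1
                        (πε.getD t pegDefault).1 = n - 1 := by
                      rw [hte]; unfold rescale; rw [if_pos (by omega)]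
                    rw [hrE] at hv'
                    rcases rescale_cases (πε.getD (t+1) pegDefault).1
                        (πε.getD (t+2) pegDefault).1 with ⟨h', he⟩ | ⟨h', he⟩ <;>
                      rw [he] at hv' <;> omega
                  · exact hq' (specOf_pos rfl hC2d)
                · refine hv_of_exceptions πε n (t+1) _ hn h1 ht2 rfl hinj _
                    (specOf_ok _ _) ?_ ?_
                  · intro i hi his hi1s hp hq hsp1 hsp2
                    have hieq : i = t - 1 := hinj i (t-1) (by omega) (by omega) (by omega)
                    subst hieq
                    rw [show t-1+1 = t from by omega] at hq hsp2
                    have hne : (πε.getD t pegDefault).1 ≠ (πε.getD (t+2) pegDefault).1 := by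
                      omega
                    rw [specOf_neg₁ hne] at hsp2
                    exact hsp2 hEM
                  · intro i hi his hi1s hp hq hsp1 hsp2
                    have hieq : i + 1 = t - 1 := hinj (i+1) (t-1) (by omega) (by omega) (by omega)
                    rw [hieq] at hsp2
                    have hne : (πε.getD (t-1) pegDefault).1 ≠ (πε.getD (t+2) pegDefault).1 := by
                      omega
                    rw [specOf_neg₁ hne] at hsp2
                    exact hsp2 hxP
              · -- iii-2c : rigid; delete t-1
                have hC2M : (πε.getD (t+2) pegDefault).2 = Deco.minus := deco_eq_minus hCm4 hC2d
                refine main_del πε n (t-1) (πε.getD (t-1) pegDefault).1 hn (by omega) h0 h1 rfl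
                  Prod.snd (fun p => Or.inl rfl) ?_ ?_
                · intro hm1 hm2
                  rw [show t-1+1 = t from by omega]
                  intro hstrip
                  rcases stripPair_cases hstrip with ⟨_, _, hq'⟩ | ⟨hv', _, _⟩
                  · exact hq' hEM
                  · have hrE : rescale (πε.getD (t-1) pegDefault).1
                        (πε.getD t pegDefault).1 = n - 1 := by
                      rw [hte]; unfold rescale; rw [if_pos (by omega)]
                    rw [hrE] at hv'
                    have hD2b := hval (t-1-1) (by omega)
                    have hD2n : (πε.getD (t-1-1) pegDefault).1 ≠ n := fun hc => by
                      have := hinj (t-1-1) t (by omega) htn (by rw [hc, hte]); omega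
                    rcases rescale_cases (πε.getD (t-1) pegDefault).1
                        (πε.getD (t-1-1) pegDefault).1 with ⟨h', he⟩ | ⟨h', he⟩ <;>
                      rw [he] at hv' <;> omega
                · refine hv_of_exceptions πε n (t-1) _ hn h1 (by omega) rfl hinj _
                    (fun p => Or.inl rfl) ?_ ?_
                  · intro i hi his hi1s hp hq hsp1 hsp2
                    have hieq : i + 1 = t + 1 := hinj (i+1) (t+1) (by omega) (by omega) (by omega)
                    have hit : i = t := by omega
                    subst hit
                    omega
                  · intro i hi his hi1s hp hq hsp1 hsp2
                    have hieq : i = t + 1 := hinj i (t+1) (by omega) (by omega) (by omega)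
                    subst hieq
                    rw [show t+1+1 = t+2 from by omega] at hp
                    omega
          · by_cases hCv : (πε.getD (t-1) pegDefault).1 + 2 = n ∧
                (πε.getD t pegDefault).2 ≠ Deco.minus
            · obtain ⟨hCv1, hCv2⟩ := hCv
              by_cases hEd : (πε.getD t pegDefault).2 = Deco.dot
              · -- iii-3a : delete t+1, specialize maximum to minus
                refine main_del πε n (t+1) (πε.getD (t+1) pegDefault).1 hn ht2 h0 h1 rfl
                  (specOf n Deco.minus) (specOf_ok _ _) ?_ ?_
                · intro hm1 hm2
                  rw [show t+1-1 = t from by omega, show t+1+1 = t+2 from by omega]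
                  intro hstrip
                  have hC2b := hval (t+2) (by omega)
                  have hC2n : (πε.getD (t+2) pegDefault).1 ≠ n := fun hc => by
                    have := hinj (t+2) t (by omega) htn (by rw [hc, hte]); omega
                  have hC2Y : (πε.getD (t+2) pegDefault).1 ≠ (πε.getD (t+1) pegDefault).1 :=
                    fun hc => by have := hinj (t+2) (t+1) (by omega) (by omega) hc; omega
                  have hC2X : (πε.getD (t+2) pegDefault).1 ≠ (πε.getD (t-1) pegDefault).1 :=
                    fun hc => by have := hinj (t+2) (t-1) (by omega) (by omega) hc; omega
                  rcases stripPair_cases hstrip with ⟨_, hp', _⟩ | ⟨hv', _, _⟩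
                  · exact hp' (specOf_pos hte hEd)
                  · have hrE : rescale (πε.getD (t+1) pegDefault).1
                        (πε.getD t pegDefault).1 = n - 1 := by
                      rw [hte]; unfold rescale; rw [if_pos (by omega)]
                    rw [hrE] at hv'
                    rcases rescale_cases (πε.getD (t+1) pegDefault).1
                        (πε.getD (t+2) pegDefault).1 with ⟨h', he⟩ | ⟨h', he⟩ <;>
                      rw [he] at hv' <;> omega
                · refine hv_of_exceptions πε n (t+1) _ hn h1 ht2 rfl hinj _
                    (specOf_ok _ _) ?_ ?_
                  · intro i hi his hi1s hp hq hsp1 hsp2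
                    have hieq : i = t - 1 := hinj i (t-1) (by omega) (by omega) (by omega)
                    subst hieq
                    rw [show t-1+1 = t from by omega] at hq hsp2
                    exact hsp2 (specOf_pos hte hEd)
                  · intro i hi his hi1s hp hq hsp1 hsp2
                    have hieq : i = t := hinj i t (by omega) htn (by omega)
                    exact hi1s (by omega)
              · -- iii-3b : rigid; delete t-1
                have hEP : (πε.getD t pegDefault).2 = Deco.plus := deco_eq_plus hCv2 hEd
                refine main_del πε n (t-1) (πε.getD (t-1) pegDefault).1 hn (by omega) h0 h1 rfl
                  Prod.snd (fun p => Or.inl rfl) ?_ ?_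
                · intro hm1 hm2
                  rw [show t-1+1 = t from by omega]
                  intro hstrip
                  have hD2b := hval (t-1-1) (by omega)
                  have hD2n : (πε.getD (t-1-1) pegDefault).1 ≠ n := fun hc => by
                    have := hinj (t-1-1) t (by omega) htn (by rw [hc, hte]); omega
                  have hD2Y : (πε.getD (t-1-1) pegDefault).1 ≠ (πε.getD (t+1) pegDefault).1 :=
                    fun hc => by have := hinj (t-1-1) (t+1) (by omega) (by omega) hc; omega
                  have hD2X : (πε.getD (t-1-1) pegDefault).1 ≠ (πε.getD (t-1) pegDefault).1 :=
                    fun hc => by have := hinj (t-1-1) (t-1) (by omega) (by omega) hc; omega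
                  have hrE : rescale (πε.getD (t-1) pegDefault).1
                      (πε.getD t pegDefault).1 = n - 1 := by
                    rw [hte]; unfold rescale; rw [if_pos (by omega)]
                  rcases stripPair_cases hstrip with ⟨hv', _, _⟩ | ⟨hv', _, _⟩
                  · rw [hrE] at hv'
                    rcases rescale_cases (πε.getD (t-1) pegDefault).1
                        (πε.getD (t-1-1) pegDefault).1 with ⟨h', he⟩ | ⟨h', he⟩ <;>
                      rw [he] at hv' <;> omega
                  · rw [hrE] at hv'
                    rcases rescale_cases (πε.getD (t-1) pegDefault).1
                        (πε.getD (t-1-1) pegDefault).1 with ⟨h', he⟩ | ⟨h', he⟩ <;>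
                      rw [he] at hv' <;> omega
                · refine hv_of_exceptions πε n (t-1) _ hn h1 (by omega) rfl hinj _
                    (fun p => Or.inl rfl) ?_ ?_
                  · intro i hi his hi1s hp hq hsp1 hsp2
                    have hieq : i + 1 = t + 1 := hinj (i+1) (t+1) (by omega) (by omega) (by omega)
                    have hit : i = t := by omega
                    subst hit
                    omega
                  · intro i hi his hi1s hp hq hsp1 hsp2
                    have hieq : i = t + 1 := hinj i (t+1) (by omega) (by omega) (by omega)
                    subst hieq
                    exact hsp1 hyP
            · -- iii-1 : delete t+1, no specialization
              refine main_del πε n (t+1) (πε.getD (t+1) pegDefault).1 hn ht2 h0 h1 rfl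
                Prod.snd (fun p => Or.inl rfl) ?_ ?_
              · intro hm1 hm2
                rw [show t+1-1 = t from by omega, show t+1+1 = t+2 from by omega]
                intro hstrip
                have hC2b := hval (t+2) (by omega)
                have hC2n : (πε.getD (t+2) pegDefault).1 ≠ n := fun hc => by
                  have := hinj (t+2) t (by omega) htn (by rw [hc, hte]); omega
                have hC2Y : (πε.getD (t+2) pegDefault).1 ≠ (πε.getD (t+1) pegDefault).1 :=
                  fun hc => by have := hinj (t+2) (t+1) (by omega) (by omega) hc; omega
                have hC2X : (πε.getD (t+2) pegDefault).1 ≠ (πε.getD (t-1) pegDefault).1 :=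
                  fun hc => by have := hinj (t+2) (t-1) (by omega) (by omega) hc; omega
                have hrE : rescale (πε.getD (t+1) pegDefault).1
                    (πε.getD t pegDefault).1 = n - 1 := by
                  rw [hte]; unfold rescale; rw [if_pos (by omega)]
                rcases stripPair_cases hstrip with ⟨hv', _, _⟩ | ⟨hv', hp', hq'⟩
                · rw [hrE] at hv'
                  rcases rescale_cases (πε.getD (t+1) pegDefault).1
                      (πε.getD (t+2) pegDefault).1 with ⟨h', he⟩ | ⟨h', he⟩ <;>
                    rw [he] at hv' <;> omega
                · rw [hrE] at hv'
                  rcases rescale_cases (πε.getD (t+1) pegDefault).1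
                      (πε.getD (t+2) pegDefault).1 with ⟨h', he⟩ | ⟨h', he⟩
                  · rw [he] at hv'; omega
                  · rw [he] at hv'
                    exact hCm ⟨by omega, by omega, hp', hq'⟩
              · refine hv_of_exceptions πε n (t+1) _ hn h1 ht2 rfl hinj _
                  (fun p => Or.inl rfl) ?_ ?_
                · intro i hi his hi1s hp hq hsp1 hsp2
                  have hieq : i = t - 1 := hinj i (t-1) (by omega) (by omega) (by omega)
                  subst hieq
                  rw [show t-1+1 = t from by omega] at hq hsp2
                  exact hCv ⟨by omega, hsp2⟩
                · intro i hi his hi1s hp hq hsp1 hsp2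
                  have hieq : i + 1 = t - 1 := hinj (i+1) (t-1) (by omega) (by omega) (by omega)
                  rw [hieq] at hsp2
                  exact hsp2 hxP
    · -- decreasing strip pair around the maximum
      by_cases hxd : (πε.getD (t-1) pegDefault).2 = Deco.dot
      · refine main_del πε n t n hn htn h0 h1 hte
          (specOf (πε.getD (t-1) pegDefault).1 Deco.plus) (specOf_ok _ _) ?_ ?_
        · intro _ _ hstrip
          rcases stripPair_cases hstrip with ⟨hv', _, _⟩ | ⟨_, hp', _⟩
          · rw [hresn _ hXb.2, hresn _ hYb.2] at hv'; omega
          · exact hp' (specOf_pos rfl hxd)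
        · exact hv_of_exceptions πε n t n hn h1 htn hte hinj _ (specOf_ok _ _)
            (etriv1 _) (etriv2 _)
      · have hxM : (πε.getD (t-1) pegDefault).2 = Deco.minus := deco_eq_minus hxp hxd
        by_cases hyd : (πε.getD (t+1) pegDefault).2 = Deco.dot
        · refine main_del πε n t n hn htn h0 h1 hte
            (specOf (πε.getD (t+1) pegDefault).1 Deco.plus) (specOf_ok _ _) ?_ ?_
          · intro _ _ hstrip
            rcases stripPair_cases hstrip with ⟨hv', _, _⟩ | ⟨_, _, hq'⟩
            · rw [hresn _ hXb.2, hresn _ hYb.2] at hv'; omega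
            · exact hq' (specOf_pos rfl hyd)
          · exact hv_of_exceptions πε n t n hn h1 htn hte hinj _ (specOf_ok _ _)
              (etriv1 _) (etriv2 _)
        · have hyM : (πε.getD (t+1) pegDefault).2 = Deco.minus := deco_eq_minus hyp hyd
          by_cases hCm : 2 ≤ t ∧ (πε.getD (t-1-1) pegDefault).1 + 1 = n ∧
              (πε.getD (t-1-1) pegDefault).2 ≠ Deco.minus ∧
              (πε.getD t pegDefault).2 ≠ Deco.minus
          · obtain ⟨hCm1, hCm2, hCm3, hCm4⟩ := hCm
            have hD2b := hval (t-1-1) (by omega)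
            have hD2n : (πε.getD (t-1-1) pegDefault).1 ≠ n := fun hc => by
              have := hinj (t-1-1) t (by omega) htn (by rw [hc, hte]); omega
            by_cases hEd : (πε.getD t pegDefault).2 = Deco.dot
            · -- dec-Cm-a : delete t-1, specialize maximum to minus
              refine main_del πε n (t-1) (πε.getD (t-1) pegDefault).1 hn (by omega) h0 h1 rfl
                (specOf n Deco.minus) (specOf_ok _ _) ?_ ?_
              · intro hm1 hm2
                rw [show t-1+1 = t from by omega]
                intro hstrip
                rcases stripPair_cases hstrip with ⟨_, _, hq'⟩ | ⟨hv', _, _⟩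
                · exact hq' (specOf_pos hte hEd)
                · have hrE : rescale (πε.getD (t-1) pegDefault).1
                      (πε.getD t pegDefault).1 = n - 1 := by
                    rw [hte]; unfold rescale; rw [if_pos (by omega)]
                  rw [hrE] at hv'
                  rcases rescale_cases (πε.getD (t-1) pegDefault).1
                      (πε.getD (t-1-1) pegDefault).1 with ⟨h', he⟩ | ⟨h', he⟩ <;>
                    rw [he] at hv' <;> omega
              · refine hv_of_exceptions πε n (t-1) _ hn h1 (by omega) rfl hinj _
                  (specOf_ok _ _) ?_ ?_
                · intro i hi his hi1s hp hq hsp1 hsp2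
                  have hieq : i = t + 1 := hinj i (t+1) (by omega) (by omega) (by omega)
                  subst hieq
                  rw [specOf_neg₁ hYn] at hsp1
                  exact hsp1 hyM
                · intro i hi his hi1s hp hq hsp1 hsp2
                  have hieq : i + 1 = t + 1 := hinj (i+1) (t+1) (by omega) (by omega) (by omega)
                  have hit : i = t := by omega
                  rw [hit] at hq
                  have := hinj (t-1-1) (t-1) (by omega) (by omega) (by omega)
                  omega
            · have hEP : (πε.getD t pegDefault).2 = Deco.plus := deco_eq_plus hCm4 hEd
              by_cases hD2d : (πε.getD (t-1-1) pegDefault).2 = Deco.dot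
              · -- dec-Cm-b : delete t-1, specialize the (n-1)-entry to minus
                refine main_del πε n (t-1) (πε.getD (t-1) pegDefault).1 hn (by omega) h0 h1 rfl
                  (specOf (πε.getD (t-1-1) pegDefault).1 Deco.minus) (specOf_ok _ _) ?_ ?_
                · intro hm1 hm2
                  rw [show t-1+1 = t from by omega]
                  intro hstrip
                  rcases stripPair_cases hstrip with ⟨_, hp', _⟩ | ⟨hv', _, _⟩
                  · exact hp' (specOf_pos rfl hD2d)
                  · have hrE : rescale (πε.getD (t-1) pegDefault).1
                        (πε.getD t pegDefault).1 = n - 1 := by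
                      rw [hte]; unfold rescale; rw [if_pos (by omega)]
                    rw [hrE] at hv'
                    rcases rescale_cases (πε.getD (t-1) pegDefault).1
                        (πε.getD (t-1-1) pegDefault).1 with ⟨h', he⟩ | ⟨h', he⟩ <;>
                      rw [he] at hv' <;> omega
                · refine hv_of_exceptions πε n (t-1) _ hn h1 (by omega) rfl hinj _
                    (specOf_ok _ _) ?_ ?_
                  · intro i hi his hi1s hp hq hsp1 hsp2
                    have hieq : i = t + 1 := hinj i (t+1) (by omega) (by omega) (by omega)
                    subst hieq
                    have hne : (πε.getD (t+1) pegDefault).1 ≠ (πε.getD (t-1-1) pegDefault).1 := by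
                      omega
                    rw [specOf_neg₁ hne] at hsp1
                    exact hsp1 hyM
                  · intro i hi his hi1s hp hq hsp1 hsp2
                    have hieq : i + 1 = t + 1 := hinj (i+1) (t+1) (by omega) (by omega) (by omega)
                    have hit : i = t := by omega
                    rw [hit] at hsp1
                    have hne : (πε.getD t pegDefault).1 ≠ (πε.getD (t-1-1) pegDefault).1 := by
                      omega
                    rw [specOf_neg₁ hne] at hsp1
                    exact hsp1 hEP
              · -- dec-Cm-c : rigid; delete t+1
                have hD2P : (πε.getD (t-1-1) pegDefault).2 = Deco.plus := deco_eq_plus hCm3 hD2d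
                refine main_del πε n (t+1) (πε.getD (t+1) pegDefault).1 hn ht2 h0 h1 rfl
                  Prod.snd (fun p => Or.inl rfl) ?_ ?_
                · intro hm1 hm2
                  rw [show t+1-1 = t from by omega, show t+1+1 = t+2 from by omega]
                  intro hstrip
                  rcases stripPair_cases hstrip with ⟨hv', _, _⟩ | ⟨_, hp', _⟩
                  · have hC2b := hval (t+2) (by omega)
                    have hC2n : (πε.getD (t+2) pegDefault).1 ≠ n := fun hc => by
                      have := hinj (t+2) t (by omega) htn (by rw [hc, hte]); omega
                    have hrE : rescale (πε.getD (t+1) pegDefault).1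
                        (πε.getD t pegDefault).1 = n - 1 := by
                      rw [hte]; unfold rescale; rw [if_pos (by omega)]
                    rw [hrE] at hv'
                    rcases rescale_cases (πε.getD (t+1) pegDefault).1
                        (πε.getD (t+2) pegDefault).1 with ⟨h', he⟩ | ⟨h', he⟩ <;>
                      rw [he] at hv' <;> omega
                  · exact hp' hEP
                · refine hv_of_exceptions πε n (t+1) _ hn h1 ht2 rfl hinj _
                    (fun p => Or.inl rfl) ?_ ?_
                  · intro i hi his hi1s hp hq hsp1 hsp2
                    have hieq : i + 1 = t - 1 := hinj (i+1) (t-1) (by omega) (by omega) (by omega)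
                    have hii : i = t-1-1 := by omega
                    subst hii
                    omega
                  · intro i hi his hi1s hp hq hsp1 hsp2
                    have hieq : i = t - 1 := hinj i (t-1) (by omega) (by omega) (by omega)
                    subst hieq
                    rw [show t-1+1 = t from by omega] at hp
                    omega
          · by_cases hCv : (πε.getD (t+1) pegDefault).1 + 2 = n ∧
                (πε.getD t pegDefault).2 ≠ Deco.plus
            · obtain ⟨hCv1, hCv2⟩ := hCv
              by_cases hEd : (πε.getD t pegDefault).2 = Deco.dot
              · -- dec-Cv-a : delete t-1, specialize maximum to plus
                refine main_del πε n (t-1) (πε.getD (t-1) pegDefault).1 hn (by omega) h0 h1 rfl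
                  (specOf n Deco.plus) (specOf_ok _ _) ?_ ?_
                · intro hm1 hm2
                  rw [show t-1+1 = t from by omega]
                  intro hstrip
                  have hD2b := hval (t-1-1) (by omega)
                  have hD2n : (πε.getD (t-1-1) pegDefault).1 ≠ n := fun hc => by
                    have := hinj (t-1-1) t (by omega) htn (by rw [hc, hte]); omega
                  have hD2Y : (πε.getD (t-1-1) pegDefault).1 ≠ (πε.getD (t+1) pegDefault).1 :=
                    fun hc => by have := hinj (t-1-1) (t+1) (by omega) (by omega) hc; omega
                  have hD2X : (πε.getD (t-1-1) pegDefault).1 ≠ (πε.getD (t-1) pegDefault).1 :=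
                    fun hc => by have := hinj (t-1-1) (t-1) (by omega) (by omega) hc; omega
                  rcases stripPair_cases hstrip with ⟨hv', _, _⟩ | ⟨_, _, hq'⟩
                  · have hrE : rescale (πε.getD (t-1) pegDefault).1
                        (πε.getD t pegDefault).1 = n - 1 := by
                      rw [hte]; unfold rescale; rw [if_pos (by omega)]
                    rw [hrE] at hv'
                    rcases rescale_cases (πε.getD (t-1) pegDefault).1
                        (πε.getD (t-1-1) pegDefault).1 with ⟨h', he⟩ | ⟨h', he⟩ <;>
                      rw [he] at hv' <;> omega
                  · exact hq' (specOf_pos hte hEd)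
                · refine hv_of_exceptions πε n (t-1) _ hn h1 (by omega) rfl hinj _
                    (specOf_ok _ _) ?_ ?_
                  · intro i hi his hi1s hp hq hsp1 hsp2
                    have hieq : i = t + 1 := hinj i (t+1) (by omega) (by omega) (by omega)
                    subst hieq
                    rw [show t+1+1 = t+2 from by omega] at hq
                    have := hinj (t+2) t (by omega) htn (by omega)
                    omega
                  · intro i hi his hi1s hp hq hsp1 hsp2
                    have hieq : i = t := hinj i t (by omega) htn (by omega)
                    subst hieq
                    exact hsp1 (specOf_pos hte hEd)
              · -- dec-Cv-b : rigid; delete t+1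
                have hEM : (πε.getD t pegDefault).2 = Deco.minus := deco_eq_minus hCv2 hEd
                refine main_del πε n (t+1) (πε.getD (t+1) pegDefault).1 hn ht2 h0 h1 rfl
                  Prod.snd (fun p => Or.inl rfl) ?_ ?_
                · intro hm1 hm2
                  rw [show t+1-1 = t from by omega, show t+1+1 = t+2 from by omega]
                  intro hstrip
                  have hC2b := hval (t+2) (by omega)
                  have hC2n : (πε.getD (t+2) pegDefault).1 ≠ n := fun hc => by
                    have := hinj (t+2) t (by omega) htn (by rw [hc, hte]); omega
                  have hC2Y : (πε.getD (t+2) pegDefault).1 ≠ (πε.getD (t+1) pegDefault).1 :=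
                    fun hc => by have := hinj (t+2) (t+1) (by omega) (by omega) hc; omega
                  have hC2X : (πε.getD (t+2) pegDefault).1 ≠ (πε.getD (t-1) pegDefault).1 :=
                    fun hc => by have := hinj (t+2) (t-1) (by omega) (by omega) hc; omega
                  rcases stripPair_cases hstrip with ⟨_, hp', _⟩ | ⟨hv', _, _⟩
                  · exact hp' hEM
                  · have hrE : rescale (πε.getD (t+1) pegDefault).1
                        (πε.getD t pegDefault).1 = n - 1 := by
                      rw [hte]; unfold rescale; rw [if_pos (by omega)]
                    rw [hrE] at hv'
                    rcases rescale_cases (πε.getD (t+1) pegDefault).1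
                        (πε.getD (t+2) pegDefault).1 with ⟨h', he⟩ | ⟨h', he⟩ <;>
                      rw [he] at hv' <;> omega
                · refine hv_of_exceptions πε n (t+1) _ hn h1 ht2 rfl hinj _
                    (fun p => Or.inl rfl) ?_ ?_
                  · intro i hi his hi1s hp hq hsp1 hsp2
                    have hieq : i + 1 = t - 1 := hinj (i+1) (t-1) (by omega) (by omega) (by omega)
                    rw [hieq] at hsp2
                    exact hsp2 hxM
                  · intro i hi his hi1s hp hq hsp1 hsp2
                    have hieq : i = t - 1 := hinj i (t-1) (by omega) (by omega) (by omega)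
                    subst hieq
                    rw [show t-1+1 = t from by omega] at hp
                    omega
            · -- dec-none : delete t-1, no specialization
              refine main_del πε n (t-1) (πε.getD (t-1) pegDefault).1 hn (by omega) h0 h1 rfl
                Prod.snd (fun p => Or.inl rfl) ?_ ?_
              · intro hm1 hm2
                rw [show t-1+1 = t from by omega]
                intro hstrip
                have hD2b := hval (t-1-1) (by omega)
                have hD2n : (πε.getD (t-1-1) pegDefault).1 ≠ n := fun hc => by
                  have := hinj (t-1-1) t (by omega) htn (by rw [hc, hte]); omega
                have hD2Y : (πε.getD (t-1-1) pegDefault).1 ≠ (πε.getD (t+1) pegDefault).1 :=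
                  fun hc => by have := hinj (t-1-1) (t+1) (by omega) (by omega) hc; omega
                have hD2X : (πε.getD (t-1-1) pegDefault).1 ≠ (πε.getD (t-1) pegDefault).1 :=
                  fun hc => by have := hinj (t-1-1) (t-1) (by omega) (by omega) hc; omega
                have hrE : rescale (πε.getD (t-1) pegDefault).1
                    (πε.getD t pegDefault).1 = n - 1 := by
                  rw [hte]; unfold rescale; rw [if_pos (by omega)]
                rcases stripPair_cases hstrip with ⟨hv', hp', hq'⟩ | ⟨hv', _, _⟩
                · rw [hrE] at hv'
                  rcases rescale_cases (πε.getD (t-1) pegDefault).1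
                      (πε.getD (t-1-1) pegDefault).1 with ⟨h', he⟩ | ⟨h', he⟩
                  · rw [he] at hv'; omega
                  · rw [he] at hv'
                    exact hCm ⟨by omega, by omega, hp', hq'⟩
                · rw [hrE] at hv'
                  rcases rescale_cases (πε.getD (t-1) pegDefault).1
                      (πε.getD (t-1-1) pegDefault).1 with ⟨h', he⟩ | ⟨h', he⟩ <;>
                    rw [he] at hv' <;> omega
              · refine hv_of_exceptions πε n (t-1) _ hn h1 (by omega) rfl hinj _
                  (fun p => Or.inl rfl) ?_ ?_
                · intro i hi his hi1s hp hq hsp1 hsp2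
                  have hieq : i = t + 1 := hinj i (t+1) (by omega) (by omega) (by omega)
                  subst hieq
                  exact hsp1 hyM
                · intro i hi his hi1s hp hq hsp1 hsp2
                  have hieq : i + 1 = t + 1 := hinj (i+1) (t+1) (by omega) (by omega) (by omega)
                  have hit : i = t := by omega
                  subst hit
                  exact hCv ⟨by omega, hsp1⟩
  · refine main_del πε n t n hn htn h0 h1 hte Prod.snd (fun p => Or.inl rfl) ?_ ?_
    · intro ht1 ht2 hstrip
      rcases stripPair_cases hstrip with ⟨hv', hp', hq'⟩ | ⟨hv', hp', hq'⟩
      · rw [hresn _ (hval (t-1) (by omega)).2, hresn _ (hval (t+1) (by omega)).2] at hv'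
        exact hB ⟨ht1, ht2, Or.inl ⟨hv', hp', hq'⟩⟩
      · rw [hresn _ (hval (t-1) (by omega)).2, hresn _ (hval (t+1) (by omega)).2] at hv'
        exact hB ⟨ht1, ht2, Or.inr ⟨hv', hp', hq'⟩⟩
    · exact hv_of_exceptions πε n t n hn h1 htn hte hinj _ (fun p => Or.inl rfl)
        (etriv1 _) (etriv2 _)
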